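/- Let (K, v) be a valued field, n ≥ 1 an integer, and f = X^n + b_{n−1}X^{n−1} + b_{n−2}X^{n−2} + ⋯ + b_0 ∈ K[X] a monic polynomial with v(b_{n−1}) = 0 and v(b_i) > 0 for all 0 ≤ i ≤ n−2. Suppose f splits over K, say f = (X − c_1)(X − c_2)⋯(X − c_n). Then v(c_i) ≥ 0 for every i, and there is exactly one index i with v(c_i) = 0 (all other roots have strictly positive valuation). -/

import Mathlib

/-- Let `(K, v)` be a valued field, `n ≥ 1`, and `f` a monic polynomial of degree `n`
whose coefficient `b_{n-1}` has `v(b_{n-1}) = 0` (multiplicatively, `v = 1`) and whose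
coefficients `b_i` for `i ≤ n-2` have `v(b_i) > 0` (multiplicatively, `v < 1`).
Suppose `f` splits, `f = (X - c_1) ⋯ (X - c_n)`. Then every root satisfies `v(c_i) ≤ 1`
and there is exactly one index `i` with `v(c_i) = 1`. -/
theorem stmt3 {K : Type*} [Field K] {Γ₀ : Type*} [LinearOrderedCommGroupWithZero Γ₀]
    (v : Valuation K Γ₀) (n : ℕ) (hn : 1 ≤ n) (c : Fin n → K)
    (f : Polynomial K) (hf : f = ∏ i, (Polynomial.X - Polynomial.C (c i)))
    (hcoeff1 : v (f.coeff (n - 1)) = 1)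
    (hcoeffs : ∀ i, i + 2 ≤ n → v (f.coeff i) < 1) :
    (∀ i, v (c i) ≤ 1) ∧ ∃! i, v (c i) = 1 := by
  have hne : Nonempty (Fin n) := Fin.pos_iff_nonempty.mp hn
  -- coefficient formula via Vieta
  have hcoeff : ∀ k : ℕ, k ≤ n → v (f.coeff (n - k)) =
      v (∑ t ∈ Finset.powersetCard k (Finset.univ : Finset (Fin n)), ∏ i ∈ t, c i) := by
    intro k hk
    have hcard : Multiset.card ((Finset.univ : Finset (Fin n)).val.map c) = n := by simp
    have hfc : f.coeff (n - k) = (-1 : K) ^ k *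
        ∑ t ∈ Finset.powersetCard k (Finset.univ : Finset (Fin n)), ∏ i ∈ t, c i := by
      have h1 : f = (Multiset.map (fun t => Polynomial.X - Polynomial.C t)
          ((Finset.univ : Finset (Fin n)).val.map c)).prod := by
        rw [hf, Multiset.map_map]; rfl
      rw [h1, Multiset.prod_X_sub_C_coeff _ (by rw [hcard]; omega), hcard,
        Nat.sub_sub_self hk, Finset.esymm_map_val]
    have hm1 : v ((-1 : K) ^ k) = 1 := by
      rw [map_pow, ← v.map_one, Valuation.map_neg, v.map_one, one_pow]
    rw [hfc, v.map_mul, hm1, one_mul]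
  obtain ⟨j0, -, hj0⟩ := Finset.exists_max_image Finset.univ (fun i => v (c i))
    Finset.univ_nonempty
  set M := v (c j0) with hM
  have hj0' : ∀ i, v (c i) ≤ M := fun i => hj0 i (Finset.mem_univ i)
  -- v (coeff (n-1)) with esymm 1
  have hsum1 : v (f.coeff (n - 1)) = v (∑ i, c i) := by
    rw [hcoeff 1 hn]
    congr 1
    rw [Finset.powersetCard_one, Finset.sum_map]
    simp
  have hM1 : (1 : Γ₀) ≤ M := by
    rw [← hcoeff1, hsum1]
    exact v.map_sum_le fun i _ => hj0' i
  have hM0 : M ≠ 0 := fun h => by simp [h] at hM1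
  set S : Finset (Fin n) := Finset.univ.filter (fun i => v (c i) = M) with hS
  have hj0S : j0 ∈ S := by simp [hS, hM]
  have hk1 : 1 ≤ S.card := Finset.card_pos.mpr ⟨j0, hj0S⟩
  have hkn : S.card ≤ n := by
    simpa using Finset.card_le_card (Finset.subset_univ S)
  -- the key valuation computation
  have hprodS : v (∏ i ∈ S, c i) = M ^ S.card := by
    rw [map_prod, Finset.prod_congr rfl (fun i hi => (Finset.mem_filter.mp hi).2),
      Finset.prod_const]
  have hkey : v (f.coeff (n - S.card)) = M ^ S.card := by
    rw [hcoeff S.card hkn, ← hprodS]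
    apply Valuation.map_sum_eq_of_lt v (j := S)
    · simp [Finset.mem_powersetCard, Finset.subset_univ]
    · intro t ht
      rw [hprodS]
      obtain ⟨hmem, htS0⟩ := Finset.mem_sdiff.mp ht
      obtain ⟨-, htc⟩ := Finset.mem_powersetCard.mp hmem
      have htS : t ≠ S := fun h => htS0 (by simp [h])
      have : ¬ t ⊆ S := fun hsub => htS (Finset.eq_of_subset_of_card_le hsub (by omega))
      obtain ⟨a, ha, haS⟩ := Finset.not_subset.mp this
      have hva : v (c a) < M :=
        lt_of_le_of_ne (hj0' a) (by simpa [hS] using haS)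
      have hrest : v (∏ i ∈ t.erase a, c i) ≤ M ^ (t.erase a).card := by
        rw [map_prod]
        exact Finset.prod_le_pow_card _ _ _ fun i _ => hj0' i
      calc v (∏ i ∈ t, c i) = v (∏ i ∈ t.erase a, c i) * v (c a) := by
            rw [← v.map_mul, mul_comm, Finset.mul_prod_erase t c ha]
        _ ≤ M ^ (t.erase a).card * v (c a) := by
            exact mul_le_mul_left hrest _
        _ < M ^ (t.erase a).card * M :=
            mul_lt_mul_of_pos_left hva (zero_lt_iff.mpr (pow_ne_zero _ hM0))
        _ = M ^ S.card := by
            rw [← pow_succ, Finset.card_erase_of_mem ha, htc]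
            congr 1; omega
  -- rule out S.card ≥ 2
  have hcard1 : S.card = 1 := by
    by_contra hne1
    have h2 : 2 ≤ S.card := by omega
    have hlt : v (f.coeff (n - S.card)) < 1 := hcoeffs _ (by omega)
    rw [hkey] at hlt
    exact absurd (le_trans (by rw [one_pow]) (pow_le_pow_left' hM1 S.card)) (not_le.mpr hlt)
  have hMeq : M = 1 := by
    have := hkey
    rw [hcard1, pow_one] at this
    rw [← this]
    exact hcoeff1
  obtain ⟨j, hj⟩ := Finset.card_eq_one.mp hcard1
  have hjM : v (c j) = M := by
    have : j ∈ S := by rw [hj]; exact Finset.mem_singleton_self j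
    exact (Finset.mem_filter.mp this).2
  refine ⟨fun i => hMeq ▸ hj0' i, j, hMeq ▸ hjM, fun y hy => ?_⟩
  have : y ∈ S := by simp [hS, hy, hMeq]
  rw [hj, Finset.mem_singleton] at this
  exact this
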